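/- For the Type II Pareto(a) distribution (Q(p)=(1−p)^{−1/a}−1, a>0), the curve L₁(p) = p·((1−p/2)^{−1/a}−1)/(2^{1/a}−1) is convex on (0,1), with L₁''(p) = (1−p/2)^{−1/a}/[a²(p−2)²(2^{1/a}−1)]·[p + a(4−p)] > 0. -/

import Mathlib

open Set Real

/-- For the Type II Pareto(a) distribution (`Q(p) = (1-p)^{-1/a} - 1`, `a > 0`), the curve
`L₁(p) = p·((1-p/2)^{-1/a} - 1)/(2^{1/a} - 1)` is convex on `(0,1)`, with
`L₁''(p) = (1-p/2)^{-1/a}/(a²(p-2)²(2^{1/a}-1)) · (p + a(4-p)) > 0`. -/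
theorem stmt_14 (a : ℝ) (ha : 0 < a) :
    (∀ p ∈ Set.Ioo (0 : ℝ) 1,
      deriv (deriv (fun p : ℝ =>
          p * ((1 - p / 2) ^ (-(1 / a)) - 1) / ((2 : ℝ) ^ (1 / a) - 1))) p =
        (1 - p / 2) ^ (-(1 / a)) /
            (a ^ 2 * (p - 2) ^ 2 * ((2 : ℝ) ^ (1 / a) - 1)) * (p + a * (4 - p)) ∧
      0 < (1 - p / 2) ^ (-(1 / a)) /
            (a ^ 2 * (p - 2) ^ 2 * ((2 : ℝ) ^ (1 / a) - 1)) * (p + a * (4 - p))) ∧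
    ConvexOn ℝ (Set.Ioo (0 : ℝ) 1)
      (fun p : ℝ => p * ((1 - p / 2) ^ (-(1 / a)) - 1) / ((2 : ℝ) ^ (1 / a) - 1)) := by
  have ha' : (0:ℝ) < 1/a := by positivity
  have ha0 : a ≠ 0 := ne_of_gt ha
  have hc : (0:ℝ) < (2:ℝ)^(1/a) - 1 := by
    have h2 : (1:ℝ) < (2:ℝ)^(1/a) :=
      (Real.one_lt_rpow_iff_of_pos (by norm_num)).mpr (Or.inl ⟨by norm_num, ha'⟩)
    linarith
  set b : ℝ := -(1/a) with hbdef
  set c : ℝ := (2:ℝ)^(1/a) - 1 with hcdef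
  have hc0 : c ≠ 0 := ne_of_gt hc
  set f : ℝ → ℝ := fun p => p * ((1 - p/2)^b - 1) / c with hfdef
  set F : ℝ → ℝ := fun p =>
    ((1 - p/2)^b - 1 + (-(1/2)*b) * (p * (1 - p/2)^(b-1))) / c with hFdef
  have hu : ∀ p : ℝ, p < 2 → 0 < 1 - p/2 := fun p hp => by linarith
  have h0 : ∀ p : ℝ, HasDerivAt (fun p : ℝ => 1 - p/2) (-(1/2)) p := by
    intro p
    simpa using ((hasDerivAt_id p).div_const 2).const_sub 1
  -- first derivative
  have hderiv1 : ∀ p : ℝ, p < 2 → HasDerivAt f (F p) p := by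
    intro p hp
    have hu' := hu p hp
    have hg : HasDerivAt (fun p : ℝ => (1 - p/2)^b) (-(1/2) * b * (1-p/2)^(b-1)) p :=
      (h0 p).rpow_const (Or.inl (ne_of_gt hu'))
    have h := ((hasDerivAt_id p).mul (hg.sub_const 1)).div_const c
    refine (h.congr_deriv ?_ : HasDerivAt _ (F p) p)
    simp only [hFdef, id_eq]
    ring
  have hdf : ∀ p : ℝ, p < 2 → deriv f p = F p := fun p hp => (hderiv1 p hp).deriv
  have hEq : ∀ p : ℝ, p < 2 → deriv f =ᶠ[nhds p] F := by
    intro p hp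
    filter_upwards [Iio_mem_nhds hp] with x hx using hdf x hx
  -- second derivative
  have hderiv2 : ∀ p : ℝ, p < 2 → HasDerivAt F
      ((-(1/2)*b*(1-p/2)^(b-1)
        + (-(1/2)*b) * (1 * (1-p/2)^(b-1) + p * (-(1/2)*(b-1)*(1-p/2)^(b-1-1)))) / c) p := by
    intro p hp
    have hu' := hu p hp
    have hg : HasDerivAt (fun p : ℝ => (1 - p/2)^b) (-(1/2) * b * (1-p/2)^(b-1)) p :=
      (h0 p).rpow_const (Or.inl (ne_of_gt hu'))
    have hg1 : HasDerivAt (fun p : ℝ => (1 - p/2)^(b-1)) (-(1/2) * (b-1) * (1-p/2)^(b-1-1)) p :=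
      (h0 p).rpow_const (Or.inl (ne_of_gt hu'))
    exact ((hg.sub_const 1).add
      (((hasDerivAt_id p).mul hg1).const_mul (-(1/2)*b))).div_const c
  have hdd : ∀ p : ℝ, p < 2 → deriv (deriv f) p =
      (1 - p/2)^b / (a^2 * (p-2)^2 * c) * (p + a * (4-p)) := by
    intro p hp
    have hu' := hu p hp
    have hu0 : (1 - p/2) ≠ 0 := ne_of_gt hu'
    have hp2 : p - 2 ≠ 0 := by linarith
    have key : deriv F p =
        (-(1/2)*b*(1-p/2)^(b-1)
          + (-(1/2)*b) * (1 * (1-p/2)^(b-1) + p * (-(1/2)*(b-1)*(1-p/2)^(b-1-1)))) / c :=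
      (hderiv2 p hp).deriv
    rw [(hEq p hp).deriv_eq, key]
    have e1 : (1-p/2)^(b-1) = (1-p/2)^b / (1-p/2) := by
      rw [Real.rpow_sub hu', Real.rpow_one]
    have e2 : (1-p/2)^(b-1-1) = (1-p/2)^b / ((1-p/2)*(1-p/2)) := by
      rw [show b-1-1 = b - 2 by ring, Real.rpow_sub hu',
        show (2:ℝ) = ((2:ℕ):ℝ) by norm_num, Real.rpow_natCast]
      ring
    have h2p : (2:ℝ) - p ≠ 0 := by linarith
    rw [e1, e2, hbdef]
    field_simp
    ring
  constructor
  · intro p hp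
    obtain ⟨hp0, hp1⟩ := hp
    have hp2 : p < 2 := by linarith
    refine ⟨hdd p hp2, ?_⟩
    have h1 : (0:ℝ) < (1 - p/2)^b := Real.rpow_pos_of_pos (hu p hp2) b
    have h2 : (0:ℝ) < a^2 * (p-2)^2 * c := by
      have h : (0:ℝ) < (p-2)^2 := by nlinarith
      exact mul_pos (mul_pos (pow_pos ha 2) h) hc
    have h3 : (0:ℝ) < p + a * (4-p) := by nlinarith
    exact mul_pos (div_pos h1 h2) h3
  · have hop : interior (Set.Ioo (0:ℝ) 1) = Set.Ioo (0:ℝ) 1 := interior_Ioo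
    refine convexOn_of_deriv2_nonneg' (convex_Ioo 0 1) ?_ ?_ ?_
    · intro p hp
      have hp2 : p < 2 := by linarith [hp.2]
      exact (hderiv1 p hp2).differentiableAt.differentiableWithinAt
    · intro p hp
      have hp2 : p < 2 := by linarith [hp.2]
      have : HasDerivAt (deriv f) _ p :=
        (hderiv2 p hp2).congr_of_eventuallyEq (hEq p hp2)
      exact this.differentiableAt.differentiableWithinAt
    · intro p hp
      have hp2 : p < 2 := by linarith [hp.2]
      have h1 : (0:ℝ) < (1 - p/2)^b := Real.rpow_pos_of_pos (hu p hp2) b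
      have h2 : (0:ℝ) < a^2 * (p-2)^2 * c := by
        have h : (0:ℝ) < (p-2)^2 := by nlinarith
        exact mul_pos (mul_pos (pow_pos ha 2) h) hc
      have h3 : (0:ℝ) < p + a * (4-p) := by nlinarith [hp.1, hp.2]
      have : deriv^[2] f p = deriv (deriv f) p := by
        simp [Function.iterate_succ, Function.iterate_zero, Function.comp]
      rw [this, hdd p hp2]
      exact le_of_lt (mul_pos (div_pos h1 h2) h3)
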